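/- Let A ∈ ℝ^{d×d} be an invertible upper triangular matrix satisfying max_{i,j∈[d], i<j} |A_{ij}| ≤ L and min_{j∈[d]} |A_{jj}| ≥ 1/M for some L, M > 0. Then A⁻¹ is upper triangular, its diagonal entries satisfy max_{j∈[d]} |A⁻¹_{jj}| ≤ M, and its strictly superdiagonal entries satisfy |A⁻¹_{ij}| ≤ M² L (M L + 1)^{j−i−1} for all i < j. -/

import Mathlib

/-- **Inverse of a bounded upper triangular matrix (Lemma 7).**  If `A` is invertible and
upper triangular with `|A_{ij}| ≤ L` above the diagonal and `|A_{jj}| ≥ 1/M` on the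
diagonal, then `A⁻¹` is upper triangular with `|A⁻¹_{jj}| ≤ M` and
`|A⁻¹_{ij}| ≤ M²L(ML+1)^{j−i−1}` for `i < j`. -/
theorem triangular_inverse_bounds
    (d : ℕ) (A : Matrix (Fin d) (Fin d) ℝ)
    (htri : A.BlockTriangular id) (hinv : IsUnit A.det)
    (L M : ℝ) (hL : 0 < L) (hM : 0 < M)
    (hoff : ∀ i j : Fin d, i < j → |A i j| ≤ L)
    (hdiag : ∀ j : Fin d, 1 / M ≤ |A j j|) :
    (A⁻¹).BlockTriangular id ∧ (∀ j : Fin d, |A⁻¹ j j| ≤ M) ∧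
      ∀ i j : Fin d, i < j →
        |A⁻¹ i j| ≤ M ^ 2 * L * (M * L + 1) ^ ((j : ℕ) - (i : ℕ) - 1) := by
  haveI : Invertible A := A.invertibleOfIsUnitDet hinv
  set B := A⁻¹ with hB
  have htriB : B.BlockTriangular id :=
    Matrix.blockTriangular_inv_of_blockTriangular htri
  have hmul : A * B = 1 := Matrix.mul_nonsing_inv A hinv
  have hApos : ∀ j : Fin d, 0 < |A j j| := fun j =>
    lt_of_lt_of_le (by positivity) (hdiag j)
  -- entry equation
  have hentry : ∀ i j : Fin d, ∑ k, A i k * B k j = (1 : Matrix (Fin d) (Fin d) ℝ) i j := by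
    intro i j
    have := congrFun (congrFun hmul i) j
    rwa [Matrix.mul_apply] at this
  -- diagonal
  have hdiagB : ∀ j : Fin d, A j j * B j j = 1 := by
    intro j
    have h := hentry j j
    rw [Matrix.one_apply_eq, Finset.sum_eq_single j] at h
    · exact h
    · intro k _ hk
      rcases lt_or_gt_of_ne hk with h' | h'
      · rw [htri (show (id k : Fin d) < id j from h'), zero_mul]
      · rw [htriB (show (id j : Fin d) < id k from h'), mul_zero]
    · intro h; exact absurd (Finset.mem_univ j) h
  have hBdiag : ∀ j : Fin d, |B j j| ≤ M := by
    intro j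
    have h1 : |A j j| * |B j j| = 1 := by rw [← abs_mul, hdiagB j, abs_one]
    have h2 : (1 / M) * |B j j| ≤ 1 := by
      calc (1 / M) * |B j j| ≤ |A j j| * |B j j| :=
            mul_le_mul_of_nonneg_right (hdiag j) (abs_nonneg _)
        _ = 1 := h1
    rw [div_mul_eq_mul_div, one_mul, div_le_one hM] at h2
    exact h2
  -- recursion step
  have recstep : ∀ i j : Fin d, i < j →
      |B i j| ≤ M * L * ∑ k ∈ Finset.Ioc i j, |B k j| := by
    intro i j hij
    have h := hentry i j
    rw [Matrix.one_apply_ne (ne_of_lt hij)] at h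
    have hsub : ∑ k, A i k * B k j = ∑ k ∈ Finset.Icc i j, A i k * B k j := by
      refine (Finset.sum_subset (Finset.subset_univ _) ?_).symm
      intro k _ hk
      rw [Finset.mem_Icc, not_and_or, not_le, not_le] at hk
      rcases hk with h' | h'
      · rw [htri (show (id k : Fin d) < id i from h'), zero_mul]
      · rw [htriB (show (id j : Fin d) < id k from h'), mul_zero]
    rw [hsub, Finset.Icc_eq_cons_Ioc (le_of_lt hij), Finset.sum_cons] at h
    have hAB : A i i * B i j = -∑ k ∈ Finset.Ioc i j, A i k * B k j := by linarith
    have habs : |A i i| * |B i j| ≤ L * ∑ k ∈ Finset.Ioc i j, |B k j| := by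
      rw [← abs_mul, hAB, abs_neg]
      calc |∑ k ∈ Finset.Ioc i j, A i k * B k j|
          ≤ ∑ k ∈ Finset.Ioc i j, |A i k * B k j| := Finset.abs_sum_le_sum_abs _ _
        _ ≤ ∑ k ∈ Finset.Ioc i j, L * |B k j| := by
            refine Finset.sum_le_sum fun k hk => ?_
            rw [abs_mul]
            exact mul_le_mul_of_nonneg_right (hoff i k (Finset.mem_Ioc.mp hk).1) (abs_nonneg _)
        _ = L * ∑ k ∈ Finset.Ioc i j, |B k j| := (Finset.mul_sum _ _ _).symm
    have h2 : (1 / M) * |B i j| ≤ L * ∑ k ∈ Finset.Ioc i j, |B k j| :=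
      le_trans (mul_le_mul_of_nonneg_right (hdiag i) (abs_nonneg _)) habs
    rw [div_mul_eq_mul_div, one_mul, div_le_iff₀ hM] at h2
    calc |B i j| ≤ L * (∑ k ∈ Finset.Ioc i j, |B k j|) * M := h2
      _ = M * L * ∑ k ∈ Finset.Ioc i j, |B k j| := by ring
  -- sum bound by induction on gap
  have Q : ∀ n : ℕ, ∀ i j : Fin d, i < j → (j : ℕ) - (i : ℕ) = n + 1 →
      ∑ k ∈ Finset.Ioc i j, |B k j| ≤ M * (M * L + 1) ^ n := by
    intro n
    induction n with
    | zero =>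
      intro i j hij hgap
      have hIoc : Finset.Ioc i j = {j} := by
        ext k
        simp only [Finset.mem_Ioc, Finset.mem_singleton, Fin.lt_def, Fin.le_def]
        have := Fin.lt_def.mp hij
        constructor
        · intro ⟨h1, h2⟩; exact Fin.ext (by omega)
        · intro h; subst h; omega
      rw [hIoc, Finset.sum_singleton, pow_zero, mul_one]
      exact hBdiag j
    | succ n ih =>
      intro i j hij hgap
      have hij' : (i : ℕ) + 1 < (j : ℕ) := by omega
      have hi'lt : (i : ℕ) + 1 < d := lt_trans hij' j.2
      set i' : Fin d := ⟨(i : ℕ) + 1, hi'lt⟩ with hi'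
      have hi'j : i' < j := by rw [Fin.lt_def]; exact hij'
      have hIoc : Finset.Ioc i j = insert i' (Finset.Ioc i' j) := by
        ext k
        simp only [Finset.mem_Ioc, Finset.mem_insert, Fin.lt_def, Fin.le_def, Fin.ext_iff]
        constructor
        · intro ⟨h1, h2⟩
          rcases eq_or_lt_of_le (show (i':ℕ) ≤ (k:ℕ) from h1) with h3 | h3
          · exact Or.inl h3.symm
          · exact Or.inr ⟨h3, h2⟩
        · rintro (h | ⟨h1, h2⟩)
          · have hv : (i' : ℕ) = (i : ℕ) + 1 := rfl
            simp only [hv, Fin.val_mk] at h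
            constructor <;> omega
          · have hv : (i' : ℕ) = (i : ℕ) + 1 := rfl
            simp only [hv, Fin.val_mk] at h1
            constructor <;> omega
      have hnotmem : i' ∉ Finset.Ioc i' j := by simp
      rw [hIoc, Finset.sum_insert hnotmem]
      have hgap' : (j : ℕ) - (i' : ℕ) = n + 1 := by simp [hi']; omega
      have hsum : ∑ k ∈ Finset.Ioc i' j, |B k j| ≤ M * (M * L + 1) ^ n := ih i' j hi'j hgap'
      have hBi' : |B i' j| ≤ M * L * (M * (M * L + 1) ^ n) :=
        le_trans (recstep i' j hi'j)
          (mul_le_mul_of_nonneg_left hsum (by positivity))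
      calc |B i' j| + ∑ k ∈ Finset.Ioc i' j, |B k j|
          ≤ M * L * (M * (M * L + 1) ^ n) + M * (M * L + 1) ^ n := add_le_add hBi' hsum
        _ = M * (M * L + 1) ^ (n + 1) := by ring
  refine ⟨htriB, hBdiag, ?_⟩
  intro i j hij
  have hgap : 1 ≤ (j : ℕ) - (i : ℕ) := by have := Fin.lt_def.mp hij; omega
  obtain ⟨n, hn⟩ : ∃ n, (j : ℕ) - (i : ℕ) = n + 1 := ⟨(j : ℕ) - (i : ℕ) - 1, by omega⟩
  have hsum := Q n i j hij hn
  have h1 : |B i j| ≤ M * L * (M * (M * L + 1) ^ n) :=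
    le_trans (recstep i j hij) (mul_le_mul_of_nonneg_left hsum (by positivity))
  have hexp : (j : ℕ) - (i : ℕ) - 1 = n := by omega
  rw [hexp]
  calc |B i j| ≤ M * L * (M * (M * L + 1) ^ n) := h1
    _ = M ^ 2 * L * (M * L + 1) ^ n := by ring
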